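/- Let S be an N×N upper triangular complex matrix and let B be an N×N matrix with lower Green generators p_B(i), q_B(j), a_B(k) (i, j, k = 1,…,N−r), p_B(N−r+1) of order r. Set s_k = S(k,k), l_k = S(k, k+1:N), and S_{N−r+1} = S(N−r+1:N, N−r+1:N). Define q_C(k) = q_B(k) and a_C(k) = a_B(k) for k = 1,…,N−r; set P^B_{N−r+1} = p_B(N−r+1) and p_C(N−r+1) = S_{N−r+1}·p_B(N−r+1); and for k = N−r,…,1 set p_C(k) = s_k·p_B(k) + l_k·P^B_{k+1}·a_B(k) and P^B_k = (p_B(k); P^B_{k+1}·a_B(k)) (the row p_B(k) stacked above the matrix P^B_{k+1}·a_B(k)). Then p_C(i), q_C(i), a_C(i) (i = 1,…,N−r), p_C(N−r+1) are lower Green generators of the product C = S·B; in particular C is a lower Green matrix of order r. -/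

import Mathlib

open Matrix

noncomputable section

/-- `A(i,j) = 0` whenever `i - j > r` (1-based; identical in 0-based `Fin` indexing). -/
def IsLowerBand (N r : ℕ) (A : Matrix (Fin N) (Fin N) ℂ) : Prop :=
  ∀ i j : Fin N, (j : ℕ) + r < (i : ℕ) → A i j = 0

/-- `A(i,j) = 0` whenever `j - i > r`. -/
def IsUpperBand (N r : ℕ) (A : Matrix (Fin N) (Fin N) ℂ) : Prop :=
  ∀ i j : Fin N, (i : ℕ) + r < (j : ℕ) → A i j = 0

/-- `rank B(k:N, 1:k+r-1) ≤ r` for every `k = 1, …, N-r` (1-based). -/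
def IsLowerGreen (N r : ℕ) (B : Matrix (Fin N) (Fin N) ℂ) : Prop :=
  ∀ (k : ℕ) (hk1 : 1 ≤ k) (hk2 : k ≤ N - r),
    (B.submatrix
      (fun i : Fin (N - k + 1) => (⟨k - 1 + (i : ℕ), by have := i.isLt; omega⟩ : Fin N))
      (fun j : Fin (k + r - 1) => (⟨(j : ℕ), by have := j.isLt; omega⟩ : Fin N))).rank ≤ r

/-- `rank B(1:k+r-1, k:N) ≤ r` for every `k = 1, …, N-r` (1-based). -/
def IsUpperGreen (N r : ℕ) (B : Matrix (Fin N) (Fin N) ℂ) : Prop :=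
  ∀ (k : ℕ) (hk1 : 1 ≤ k) (hk2 : k ≤ N - r),
    (B.submatrix
      (fun i : Fin (k + r - 1) => (⟨(i : ℕ), by have := i.isLt; omega⟩ : Fin N))
      (fun j : Fin (N - k + 1) => (⟨k - 1 + (j : ℕ), by have := j.isLt; omega⟩ : Fin N))).rank ≤ r

/-- `a^>_{i,s} = a(i-1) a(i-2) ⋯ a(s+1)`, equal to `I_r` when `s ≥ i - 1`. -/
def aGT (r : ℕ) (a : ℕ → Matrix (Fin r) (Fin r) ℂ) (i s : ℕ) :
    Matrix (Fin r) (Fin r) ℂ :=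
  (((List.range' (s + 1) (i - 1 - s)).reverse).map a).prod

/-- `p(i) ∈ ℂ^{1×r}` (i = 1,…,N−r), `pLast = p(N−r+1) ∈ ℂ^{r×r}`, `q(j) ∈ ℂ^{r×1}`,
`a(k) ∈ ℂ^{r×r}` are lower Green generators of the `N×N` matrix `B`:
`B(i,1:r) = p(i)·a^>_{i,0}`, `B(i,r+s-1) = p(i)·a^>_{i,s-1}·q(s-1)` for `2 ≤ s ≤ i ≤ N-r`,
and the analogous identities for the last `r` rows `B(N-r+1:N, ·)` with `pLast`. -/
def IsLowerGreenGenerators (N r : ℕ) (hNr : r < N)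
    (p : ℕ → Matrix (Fin 1) (Fin r) ℂ) (q : ℕ → Matrix (Fin r) (Fin 1) ℂ)
    (a : ℕ → Matrix (Fin r) (Fin r) ℂ) (pLast : Matrix (Fin r) (Fin r) ℂ)
    (B : Matrix (Fin N) (Fin N) ℂ) : Prop :=
  (∀ (i : ℕ) (hi1 : 1 ≤ i) (hi2 : i ≤ N - r) (j : Fin r),
      B ⟨i - 1, by omega⟩ ⟨(j : ℕ), by have := j.isLt; omega⟩ = (p i * aGT r a i 0) 0 j)
  ∧ (∀ (i : ℕ) (hi1 : 1 ≤ i) (hi2 : i ≤ N - r) (s : ℕ) (hs1 : 2 ≤ s) (hs2 : s ≤ i),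
      B ⟨i - 1, by omega⟩ ⟨r + s - 2, by omega⟩
        = (p i * aGT r a i (s - 1) * q (s - 1)) 0 0)
  ∧ (∀ (t : Fin r) (j : Fin r),
      B ⟨N - r + (t : ℕ), by have := t.isLt; omega⟩ ⟨(j : ℕ), by have := j.isLt; omega⟩
        = (pLast * aGT r a (N - r + 1) 0) t j)
  ∧ (∀ (t : Fin r) (s : ℕ) (hs1 : 2 ≤ s) (hs2 : s ≤ N - r + 1),
      B ⟨N - r + (t : ℕ), by have := t.isLt; omega⟩ ⟨r + s - 2, by omega⟩
        = (pLast * aGT r a (N - r + 1) (s - 1) * q (s - 1)) t 0)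

/-- The embedded factor `I_{k-1} ⊕ M ⊕ I_{N-k-r}` (1-based block position `k`),
i.e. `M` occupies (1-based) rows and columns `k, …, k+r` of an `N×N` identity. -/
def embed (N r k : ℕ) (M : Matrix (Fin (r + 1)) (Fin (r + 1)) ℂ) :
    Matrix (Fin N) (Fin N) ℂ :=
  Matrix.of fun i j =>
    if h : k - 1 ≤ (i : ℕ) ∧ (i : ℕ) < k + r ∧ k - 1 ≤ (j : ℕ) ∧ (j : ℕ) < k + r then
      M ⟨(i : ℕ) - (k - 1), by omega⟩ ⟨(j : ℕ) - (k - 1), by omega⟩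
    else if (i : ℕ) = (j : ℕ) then 1 else 0

/-- The embedded last factor `I_{N-r} ⊕ M`. -/
def embedLast (N r : ℕ) (M : Matrix (Fin r) (Fin r) ℂ) : Matrix (Fin N) (Fin N) ℂ :=
  Matrix.of fun i j =>
    if h : N - r ≤ (i : ℕ) ∧ N - r ≤ (j : ℕ) then
      M ⟨(i : ℕ) - (N - r), by have := i.isLt; omega⟩
        ⟨(j : ℕ) - (N - r), by have := j.isLt; omega⟩
    else if (i : ℕ) = (j : ℕ) then 1 else 0

/-- `G̃_1 · G̃_2 ⋯ G̃_{N-r}` (increasing order of indices). -/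
def prodAsc (N r : ℕ) (G : ℕ → Matrix (Fin (r + 1)) (Fin (r + 1)) ℂ) :
    Matrix (Fin N) (Fin N) ℂ :=
  ((List.range' 1 (N - r)).map (fun k => embed N r k (G k))).prod

/-- `G̃_{N-r} · G̃_{N-r-1} ⋯ G̃_1` (decreasing order of indices). -/
def prodDesc (N r : ℕ) (G : ℕ → Matrix (Fin (r + 1)) (Fin (r + 1)) ℂ) :
    Matrix (Fin N) (Fin N) ℂ :=
  (((List.range' 1 (N - r)).reverse).map (fun k => embed N r k (G k))).prod

/-- The `1×r` block `p` of the partition `M = [[p, d], [a, q]]`. -/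
def blkP (r : ℕ) (M : Matrix (Fin (r + 1)) (Fin (r + 1)) ℂ) : Matrix (Fin 1) (Fin r) ℂ :=
  Matrix.of fun _ j => M 0 j.castSucc

/-- The `1×1` block `d` of the partition `M = [[p, d], [a, q]]`. -/
def blkD (r : ℕ) (M : Matrix (Fin (r + 1)) (Fin (r + 1)) ℂ) : ℂ := M 0 (Fin.last r)

/-- The `r×r` block `a` of the partition `M = [[p, d], [a, q]]`. -/
def blkA (r : ℕ) (M : Matrix (Fin (r + 1)) (Fin (r + 1)) ℂ) : Matrix (Fin r) (Fin r) ℂ :=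
  Matrix.of fun i j => M i.succ j.castSucc

/-- The `r×1` block `q` of the partition `M = [[p, d], [a, q]]`. -/
def blkQ (r : ℕ) (M : Matrix (Fin (r + 1)) (Fin (r + 1)) ℂ) : Matrix (Fin r) (Fin 1) ℂ :=
  Matrix.of fun i _ => M i.succ (Fin.last r)

/-- Assemble the `(r+1)×(r+1)` matrix `[[p, d], [a, q]]` from its blocks. -/
def mkBlk (r : ℕ) (p : Matrix (Fin 1) (Fin r) ℂ) (d : ℂ)
    (a : Matrix (Fin r) (Fin r) ℂ) (q : Matrix (Fin r) (Fin 1) ℂ) :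
    Matrix (Fin (r + 1)) (Fin (r + 1)) ℂ :=
  Matrix.of fun i j =>
    if hi : (i : ℕ) = 0 then
      if hj : (j : ℕ) < r then p 0 ⟨(j : ℕ), hj⟩ else d
    else
      if hj : (j : ℕ) < r then a ⟨(i : ℕ) - 1, by have := i.isLt; omega⟩ ⟨(j : ℕ), hj⟩
      else q ⟨(i : ℕ) - 1, by have := i.isLt; omega⟩ 0

/-- The elementary Gauss factor `[[1, 0_{1×r}], [-f, I_r]]`. -/
def elemL (r : ℕ) (f : Matrix (Fin r) (Fin 1) ℂ) :
    Matrix (Fin (r + 1)) (Fin (r + 1)) ℂ :=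
  Matrix.of fun i j =>
    if hi : (i : ℕ) = 0 then (if (j : ℕ) = 0 then 1 else 0)
    else if hj : (j : ℕ) = 0 then -f ⟨(i : ℕ) - 1, by have := i.isLt; omega⟩ 0
    else if (i : ℕ) = (j : ℕ) then 1 else 0

/-- The elementary factor `[[I_r, 0_{r×1}], [-g, 1]]`. -/
def elemLrow (r : ℕ) (g : Matrix (Fin 1) (Fin r) ℂ) :
    Matrix (Fin (r + 1)) (Fin (r + 1)) ℂ :=
  Matrix.of fun i j =>
    if hi : (i : ℕ) < r then
      (if hj : (j : ℕ) < r then (if (i : ℕ) = (j : ℕ) then 1 else 0) else 0)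
    else if hj : (j : ℕ) < r then -g 0 ⟨(j : ℕ), hj⟩ else 1

/-- All leading principal minors are nonzero. -/
def StronglyRegular (N : ℕ) (A : Matrix (Fin N) (Fin N) ℂ) : Prop :=
  ∀ (k : ℕ) (hk : k ≤ N), 1 ≤ k →
    (A.submatrix (Fin.castLE hk) (Fin.castLE hk)).det ≠ 0

lemma aGT_of_le (r : ℕ) (a : ℕ → Matrix (Fin r) (Fin r) ℂ) {i s : ℕ} (h : i ≤ s + 1) :
    aGT r a i s = 1 := by
  unfold aGT
  have : i - 1 - s = 0 := by omega
  simp [this]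

lemma aGT_succ (r : ℕ) (a : ℕ → Matrix (Fin r) (Fin r) ℂ) {i s : ℕ} (h : s + 1 < i) :
    aGT r a i s = aGT r a i (s + 1) * a (s + 1) := by
  unfold aGT
  have h1 : i - 1 - s = (i - 1 - (s + 1)) + 1 := by omega
  rw [h1, List.range'_succ]
  simp [List.prod_append]

lemma aGT_split (r : ℕ) (a : ℕ → Matrix (Fin r) (Fin r) ℂ) {i s m : ℕ}
    (h1 : s ≤ m) (h2 : m + 1 ≤ i) :
    aGT r a i s = aGT r a i m * aGT r a (m + 1) s := by
  unfold aGT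
  have key : List.range' (s + 1) (m - s) ++ List.range' (m + 1) (i - 1 - m)
      = List.range' (s + 1) (i - 1 - s) := by
    have h3 := @List.range'_append_1 (s + 1) (m - s) (i - 1 - m)
    rw [show s + 1 + (m - s) = m + 1 by omega] at h3
    rw [h3]; congr 1; omega
  rw [← key]
  simp [List.prod_append, show m + 1 - 1 - s = m - s by omega]

lemma sum_tail {N c : ℕ} (hc : c ≤ N) (f : Fin N → ℂ)
    (h0 : ∀ m : Fin N, (m : ℕ) < c → f m = 0) :
    ∑ m, f m = ∑ t : Fin (N - c), f ⟨c + (t : ℕ), by have := t.isLt; omega⟩ := by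
  have e1 : ∑ m : Fin N, f m
      = ∑ i : Fin N, (fun x => if h : x < N then f ⟨x, h⟩ else 0) (i : ℕ) := by
    apply Finset.sum_congr rfl
    intro m _
    simp [m.isLt]
  rw [e1, Fin.sum_univ_eq_sum_range (fun x => if h : x < N then f ⟨x, h⟩ else 0)]
  have hz : ∑ x ∈ Finset.Ico 0 c, (if h : x < N then f ⟨x, h⟩ else 0) = 0 := by
    apply Finset.sum_eq_zero
    intro x hx
    simp only [Finset.mem_Ico] at hx
    rw [dif_pos (by omega)]
    exact h0 _ hx.2
  rw [Finset.range_eq_Ico, ← Finset.sum_Ico_consecutive _ (Nat.zero_le c) hc, hz, zero_add,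
    Finset.sum_Ico_eq_sum_range,
    ← Fin.sum_univ_eq_sum_range (fun k => if h : c + k < N then f ⟨c + k, h⟩ else 0)]
  apply Finset.sum_congr rfl
  intro t _
  have ht : c + (t : ℕ) < N := by have := t.isLt; omega
  simp only [dif_pos ht]

lemma fin_sum_ext {m n : ℕ} (h : m = n) (f : Fin m → ℂ) (g : Fin n → ℂ)
    (hfg : ∀ t : Fin m, f t = g ⟨(t : ℕ), h ▸ t.isLt⟩) : ∑ t, f t = ∑ t, g t := by
  subst h
  exact Finset.sum_congr rfl fun t _ => by rw [hfg t]

lemma keyP (N r : ℕ) (hr : 0 < r) (hNr : r < N)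
    (pB : ℕ → Matrix (Fin 1) (Fin r) ℂ)
    (aB : ℕ → Matrix (Fin r) (Fin r) ℂ) (pBlast : Matrix (Fin r) (Fin r) ℂ)
    (P : ℕ → ℕ → Fin r → ℂ)
    (hPtop : ∀ (t : Fin r) (j : Fin r), P (N - r + 1) (t : ℕ) j = pBlast t j)
    (hPfirst : ∀ (k : ℕ) (hk1 : 1 ≤ k) (hk2 : k ≤ N - r) (j : Fin r),
        P k 0 j = pB k 0 j)
    (hPrec : ∀ (k : ℕ) (hk1 : 1 ≤ k) (hk2 : k ≤ N - r) (t : ℕ) (j : Fin r),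
        P k (t + 1) j = ∑ l : Fin r, P (k + 1) t l * aB k l j) :
    ∀ (t k : ℕ) (hk1 : 1 ≤ k) (hk2 : k ≤ N - r + 1) (hkt : k + t ≤ N) (j : Fin r),
    (∀ (h : k + t ≤ N - r), P k t j = (pB (k + t) * aGT r aB (k + t) (k - 1)) 0 j) ∧
    (∀ (h : N - r < k + t),
      P k t j = (pBlast * aGT r aB (N - r + 1) (k - 1)) ⟨k + t - (N - r + 1), by omega⟩ j) := by
  intro t
  induction t with
  | zero =>
    intro k hk1 hk2 hkt j
    simp only [Nat.add_zero]
    constructor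
    · intro h
      rw [hPfirst k hk1 (by omega), aGT_of_le r aB (by omega), Matrix.mul_one]
    · intro h
      have hk : k = N - r + 1 := by omega
      subst hk
      rw [aGT_of_le r aB (by omega), Matrix.mul_one]
      simp only [show N - r + 1 + 0 - (N - r + 1) = 0 from by omega]
      exact hPtop ⟨0, hr⟩ j
  | succ t ih =>
    intro k hk1 hk2 hkt j
    by_cases hk : k ≤ N - r
    · rw [hPrec k hk1 hk t j]
      simp only [show k + (t + 1) = k + 1 + t from by omega]
      constructor
      · intro h
        have hsum : ∀ l, P (k + 1) t l = (pB (k + 1 + t) * aGT r aB (k + 1 + t) k) 0 l := by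
          intro l
          have := (ih (k + 1) (by omega) (by omega) (by omega) l).1 (by omega)
          simpa using this
        have e : aGT r aB (k + 1 + t) (k - 1) = aGT r aB (k + 1 + t) k * aB k := by
          have h' := aGT_succ r aB (i := k + 1 + t) (s := k - 1) (by omega)
          rwa [show k - 1 + 1 = k from by omega] at h'
        rw [e, ← Matrix.mul_assoc, Matrix.mul_apply]
        apply Finset.sum_congr rfl
        intro l _
        rw [hsum l]
      · intro h
        have hsum : ∀ l, P (k + 1) t l
            = (pBlast * aGT r aB (N - r + 1) k) ⟨k + 1 + t - (N - r + 1), by omega⟩ l := by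
          intro l
          have := (ih (k + 1) (by omega) (by omega) (by omega) l).2 (by omega)
          simpa using this
        have e : aGT r aB (N - r + 1) (k - 1) = aGT r aB (N - r + 1) k * aB k := by
          have h' := aGT_succ r aB (i := N - r + 1) (s := k - 1) (by omega)
          rwa [show k - 1 + 1 = k from by omega] at h'
        rw [e, ← Matrix.mul_assoc, Matrix.mul_apply]
        apply Finset.sum_congr rfl
        intro l _
        rw [hsum l]
    · have hk' : k = N - r + 1 := by omega
      subst hk'
      constructor
      · intro h; omega
      · intro h
        rw [aGT_of_le r aB (by omega), Matrix.mul_one]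
        simp only [show N - r + 1 + (t + 1) - (N - r + 1) = t + 1 from by omega]
        exact hPtop ⟨t + 1, by omega⟩ j


set_option maxHeartbeats 2000000 in
/-- Multiplying a lower Green matrix `B` (given via lower Green generators) on the left by
an upper triangular matrix `S` yields a lower Green matrix `C = S·B` of order `r`, whose
lower Green generators are `q_C = q_B`, `a_C = a_B`,
`p_C(N-r+1) = S(N-r+1:N, N-r+1:N)·p_B(N-r+1)` and, recursively downwards,
`p_C(k) = s_k·p_B(k) + l_k·P^B_{k+1}·a_B(k)` with
`P^B_{N-r+1} = p_B(N-r+1)`, `P^B_k = (p_B(k); P^B_{k+1}·a_B(k))`. -/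
theorem upperTriangular_mul_lowerGreen (N r : ℕ) (hr : 0 < r) (hNr : r < N)
    (S B : Matrix (Fin N) (Fin N) ℂ)
    (hS : ∀ i j : Fin N, (j : ℕ) < (i : ℕ) → S i j = 0)
    (pB : ℕ → Matrix (Fin 1) (Fin r) ℂ) (qB : ℕ → Matrix (Fin r) (Fin 1) ℂ)
    (aB : ℕ → Matrix (Fin r) (Fin r) ℂ) (pBlast : Matrix (Fin r) (Fin r) ℂ)
    (hgen : IsLowerGreenGenerators N r hNr pB qB aB pBlast B)
    -- the matrices `P^B_k` (of size `(N-k+1)×r`), encoded by their rows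
    (P : ℕ → ℕ → Fin r → ℂ)
    (hPtop : ∀ (t : Fin r) (j : Fin r), P (N - r + 1) (t : ℕ) j = pBlast t j)
    (hPfirst : ∀ (k : ℕ) (hk1 : 1 ≤ k) (hk2 : k ≤ N - r) (j : Fin r),
      P k 0 j = pB k 0 j)
    (hPrec : ∀ (k : ℕ) (hk1 : 1 ≤ k) (hk2 : k ≤ N - r) (t : ℕ) (j : Fin r),
      P k (t + 1) j = ∑ l : Fin r, P (k + 1) t l * aB k l j)
    -- the generators `p_C`
    (pC : ℕ → Matrix (Fin 1) (Fin r) ℂ)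
    (hpC : ∀ (k : ℕ) (hk1 : 1 ≤ k) (hk2 : k ≤ N - r) (j : Fin r),
      pC k 0 j = S ⟨k - 1, by omega⟩ ⟨k - 1, by omega⟩ * pB k 0 j
        + ∑ t : Fin (N - k), ∑ l : Fin r,
            S ⟨k - 1, by omega⟩ ⟨k + (t : ℕ), by have := t.isLt; omega⟩
              * P (k + 1) (t : ℕ) l * aB k l j)
    (pClast : Matrix (Fin r) (Fin r) ℂ)
    (hpClast : ∀ (i : Fin r) (j : Fin r),
      pClast i j = ∑ l : Fin r,
        S ⟨N - r + (i : ℕ), by have := i.isLt; omega⟩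
          ⟨N - r + (l : ℕ), by have := l.isLt; omega⟩ * pBlast l j) :
    IsLowerGreenGenerators N r hNr pC qB aB pClast (S * B) ∧ IsLowerGreen N r (S * B) := by
  obtain ⟨hg1, hg2, hg3, hg4⟩ := hgen
  have key := keyP N r hr hNr pB aB pBlast P hPtop hPfirst hPrec
  -- cleaner form of the last-rows generator identities
  have hg3' : ∀ (m : ℕ) (h1 : N - r + 1 ≤ m) (h2 : m ≤ N) (j : Fin r),
      B ⟨m - 1, by omega⟩ ⟨(j : ℕ), by have := j.isLt; omega⟩
        = (pBlast * aGT r aB (N - r + 1) 0) ⟨m - (N - r + 1), by omega⟩ j := by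
    intro m h1 h2 j
    have h3 := hg3 ⟨m - (N - r + 1), by omega⟩ j
    simp only [show N - r + (m - (N - r + 1)) = m - 1 from by omega] at h3
    exact h3
  have hg4' : ∀ (m : ℕ) (h1 : N - r + 1 ≤ m) (h2 : m ≤ N) (s : ℕ)
      (hs1 : 2 ≤ s) (hs2 : s ≤ N - r + 1),
      B ⟨m - 1, by omega⟩ ⟨r + s - 2, by omega⟩
        = (pBlast * aGT r aB (N - r + 1) (s - 1) * qB (s - 1)) ⟨m - (N - r + 1), by omega⟩ 0 := by
    intro m h1 h2 s hs1 hs2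
    have h4 := hg4 ⟨m - (N - r + 1), by omega⟩ s hs1 hs2
    simp only [show N - r + (m - (N - r + 1)) = m - 1 from by omega] at h4
    exact h4
  -- rows of B expressed through P k
  have claimA : ∀ (k t : ℕ) (hk1 : 1 ≤ k) (hk2 : k ≤ N - r) (ht : t ≤ N - k) (j : Fin r),
      B ⟨k - 1 + t, by omega⟩ ⟨(j : ℕ), by have := j.isLt; omega⟩
        = ∑ l : Fin r, P k t l * aGT r aB k 0 l j := by
    intro k t hk1 hk2 ht j
    have hsplit : aGT r aB (k + t) 0 = aGT r aB (k + t) (k - 1) * aGT r aB k 0 := by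
      have h' := aGT_split r aB (i := k + t) (s := 0) (m := k - 1) (by omega) (by omega)
      rwa [show k - 1 + 1 = k from by omega] at h'
    by_cases h : k + t ≤ N - r
    · have hB := hg1 (k + t) (by omega) h j
      simp only [show k + t - 1 = k - 1 + t from by omega] at hB
      rw [hB, hsplit, ← Matrix.mul_assoc, Matrix.mul_apply]
      apply Finset.sum_congr rfl
      intro l _
      rw [(key t k hk1 (by omega) (by omega) l).1 h]
    · push_neg at h
      have hB := hg3' (k + t) (by omega) (by omega) j
      simp only [show k + t - 1 = k - 1 + t from by omega] at hB
      have hsplit2 : aGT r aB (N - r + 1) 0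
          = aGT r aB (N - r + 1) (k - 1) * aGT r aB k 0 := by
        have h' := aGT_split r aB (i := N - r + 1) (s := 0) (m := k - 1) (by omega) (by omega)
        rwa [show k - 1 + 1 = k from by omega] at h'
      rw [hB, hsplit2, ← Matrix.mul_assoc, Matrix.mul_apply]
      apply Finset.sum_congr rfl
      intro l _
      rw [(key t k hk1 (by omega) (by omega) l).2 (by omega)]
  have claimB : ∀ (k t s : ℕ) (hk1 : 1 ≤ k) (hk2 : k ≤ N - r) (ht : t ≤ N - k)
      (hs1 : 2 ≤ s) (hs2 : s ≤ k),
      B ⟨k - 1 + t, by omega⟩ ⟨r + s - 2, by omega⟩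
        = ∑ l : Fin r, P k t l * (aGT r aB k (s - 1) * qB (s - 1)) l 0 := by
    intro k t s hk1 hk2 ht hs1 hs2
    have hsplit : aGT r aB (k + t) (s - 1)
        = aGT r aB (k + t) (k - 1) * aGT r aB k (s - 1) := by
      have h' := aGT_split r aB (i := k + t) (s := s - 1) (m := k - 1) (by omega) (by omega)
      rwa [show k - 1 + 1 = k from by omega] at h'
    by_cases h : k + t ≤ N - r
    · have hB := hg2 (k + t) (by omega) h s hs1 (by omega)
      simp only [show k + t - 1 = k - 1 + t from by omega] at hB
      rw [hB, hsplit, ← Matrix.mul_assoc,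
        Matrix.mul_assoc (pB (k + t) * aGT r aB (k + t) (k - 1)) _ _, Matrix.mul_apply]
      apply Finset.sum_congr rfl
      intro l _
      rw [(key t k hk1 (by omega) (by omega) l).1 h]
    · push_neg at h
      have hB := hg4' (k + t) (by omega) (by omega) s hs1 (by omega)
      simp only [show k + t - 1 = k - 1 + t from by omega] at hB
      have hsplit2 : aGT r aB (N - r + 1) (s - 1)
          = aGT r aB (N - r + 1) (k - 1) * aGT r aB k (s - 1) := by
        have h' := aGT_split r aB (i := N - r + 1) (s := s - 1) (m := k - 1)
          (by omega) (by omega)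
        rwa [show k - 1 + 1 = k from by omega] at h'
      rw [hB, hsplit2, ← Matrix.mul_assoc,
        Matrix.mul_assoc (pBlast * aGT r aB (N - r + 1) (k - 1)) _ _, Matrix.mul_apply]
      apply Finset.sum_congr rfl
      intro l _
      rw [(key t k hk1 (by omega) (by omega) l).2 (by omega)]
  -- pC as a single sum
  have hpCsum : ∀ (k : ℕ) (hk1 : 1 ≤ k) (hk2 : k ≤ N - r) (l : Fin r),
      pC k 0 l = ∑ t : Fin (N - (k - 1)),
        S ⟨k - 1, by omega⟩ ⟨k - 1 + (t : ℕ), by have := t.isLt; omega⟩ * P k (t : ℕ) l := by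
    intro k hk1 hk2 l
    rw [hpC k hk1 hk2 l]
    rw [show (∑ t : Fin (N - (k - 1)),
        S ⟨k - 1, by omega⟩ ⟨k - 1 + (t : ℕ), by have := t.isLt; omega⟩ * P k (t : ℕ) l)
      = ∑ t : Fin (N - k + 1),
        S ⟨k - 1, by omega⟩ ⟨k - 1 + (t : ℕ), by have := t.isLt; omega⟩ * P k (t : ℕ) l from
      fin_sum_ext (by omega) _ _ (fun t => rfl)]
    rw [Fin.sum_univ_succ]
    congr 1
    · simp only [Fin.val_zero, Nat.add_zero]
      rw [hPfirst k hk1 hk2 l]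
    · apply Finset.sum_congr rfl
      intro t _
      simp only [Fin.val_succ, show ∀ x : ℕ, k - 1 + (x + 1) = k + x from fun x => by omega]
      rw [hPrec k hk1 hk2 (t : ℕ) l, Finset.mul_sum]
      apply Finset.sum_congr rfl
      intro l' _
      ring
  -- the four generator identities for C = S * B
  have hc1 : ∀ (i : ℕ) (hi1 : 1 ≤ i) (hi2 : i ≤ N - r) (j : Fin r),
      (S * B) ⟨i - 1, by omega⟩ ⟨(j : ℕ), by have := j.isLt; omega⟩
        = (pC i * aGT r aB i 0) 0 j := by
    intro i hi1 hi2 j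
    rw [Matrix.mul_apply]
    rw [sum_tail (N := N) (c := i - 1) (by omega)
      (fun m => S ⟨i - 1, by omega⟩ m * B m ⟨(j : ℕ), by have := j.isLt; omega⟩)
      (fun m hm => mul_eq_zero_of_left (hS _ m hm) _)]
    have hBrow : ∀ t : Fin (N - (i - 1)),
        B ⟨i - 1 + (t : ℕ), by have := t.isLt; omega⟩ ⟨(j : ℕ), by have := j.isLt; omega⟩
          = ∑ l : Fin r, P i (t : ℕ) l * aGT r aB i 0 l j := fun t =>
      claimA i (t : ℕ) hi1 hi2 (by have := t.isLt; omega) j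
    calc (∑ t : Fin (N - (i - 1)),
          S ⟨i - 1, by omega⟩ ⟨i - 1 + (t : ℕ), by have := t.isLt; omega⟩
            * B ⟨i - 1 + (t : ℕ), by have := t.isLt; omega⟩ ⟨(j : ℕ), by have := j.isLt; omega⟩)
        = ∑ t : Fin (N - (i - 1)), ∑ l : Fin r,
            S ⟨i - 1, by omega⟩ ⟨i - 1 + (t : ℕ), by have := t.isLt; omega⟩
              * (P i (t : ℕ) l * aGT r aB i 0 l j) := by
          apply Finset.sum_congr rfl
          intro t _
          rw [hBrow t, Finset.mul_sum]
      _ = ∑ l : Fin r, (∑ t : Fin (N - (i - 1)),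
            S ⟨i - 1, by omega⟩ ⟨i - 1 + (t : ℕ), by have := t.isLt; omega⟩
              * P i (t : ℕ) l) * aGT r aB i 0 l j := by
          rw [Finset.sum_comm]
          apply Finset.sum_congr rfl
          intro l _
          rw [Finset.sum_mul]
          apply Finset.sum_congr rfl
          intro t _
          ring
      _ = (pC i * aGT r aB i 0) 0 j := by
          rw [Matrix.mul_apply]
          apply Finset.sum_congr rfl
          intro l _
          rw [hpCsum i hi1 hi2 l]
  have hc2 : ∀ (i : ℕ) (hi1 : 1 ≤ i) (hi2 : i ≤ N - r) (s : ℕ) (hs1 : 2 ≤ s) (hs2 : s ≤ i),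
      (S * B) ⟨i - 1, by omega⟩ ⟨r + s - 2, by omega⟩
        = (pC i * aGT r aB i (s - 1) * qB (s - 1)) 0 0 := by
    intro i hi1 hi2 s hs1 hs2
    rw [Matrix.mul_apply]
    rw [sum_tail (N := N) (c := i - 1) (by omega)
      (fun m => S ⟨i - 1, by omega⟩ m * B m ⟨r + s - 2, by omega⟩)
      (fun m hm => mul_eq_zero_of_left (hS _ m hm) _)]
    have hBrow : ∀ t : Fin (N - (i - 1)),
        B ⟨i - 1 + (t : ℕ), by have := t.isLt; omega⟩ ⟨r + s - 2, by omega⟩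
          = ∑ l : Fin r, P i (t : ℕ) l * (aGT r aB i (s - 1) * qB (s - 1)) l 0 := fun t =>
      claimB i (t : ℕ) s hi1 hi2 (by have := t.isLt; omega) hs1 hs2
    calc (∑ t : Fin (N - (i - 1)),
          S ⟨i - 1, by omega⟩ ⟨i - 1 + (t : ℕ), by have := t.isLt; omega⟩
            * B ⟨i - 1 + (t : ℕ), by have := t.isLt; omega⟩ ⟨r + s - 2, by omega⟩)
        = ∑ t : Fin (N - (i - 1)), ∑ l : Fin r,
            S ⟨i - 1, by omega⟩ ⟨i - 1 + (t : ℕ), by have := t.isLt; omega⟩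
              * (P i (t : ℕ) l * (aGT r aB i (s - 1) * qB (s - 1)) l 0) := by
          apply Finset.sum_congr rfl
          intro t _
          rw [hBrow t, Finset.mul_sum]
      _ = ∑ l : Fin r, (∑ t : Fin (N - (i - 1)),
            S ⟨i - 1, by omega⟩ ⟨i - 1 + (t : ℕ), by have := t.isLt; omega⟩
              * P i (t : ℕ) l) * (aGT r aB i (s - 1) * qB (s - 1)) l 0 := by
          rw [Finset.sum_comm]
          apply Finset.sum_congr rfl
          intro l _
          rw [Finset.sum_mul]
          apply Finset.sum_congr rfl
          intro t _
          ring
      _ = (pC i * aGT r aB i (s - 1) * qB (s - 1)) 0 0 := by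
          rw [Matrix.mul_assoc, Matrix.mul_apply]
          apply Finset.sum_congr rfl
          intro l _
          rw [hpCsum i hi1 hi2 l]
  have hc3 : ∀ (t : Fin r) (j : Fin r),
      (S * B) ⟨N - r + (t : ℕ), by have := t.isLt; omega⟩ ⟨(j : ℕ), by have := j.isLt; omega⟩
        = (pClast * aGT r aB (N - r + 1) 0) t j := by
    intro t j
    rw [Matrix.mul_apply]
    rw [sum_tail (N := N) (c := N - r) (by omega)
      (fun m => S ⟨N - r + (t : ℕ), by have := t.isLt; omega⟩ m
        * B m ⟨(j : ℕ), by have := j.isLt; omega⟩)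
      (fun m hm => mul_eq_zero_of_left
        (hS _ m (show (m : ℕ) < N - r + (t : ℕ) from by omega)) _)]
    rw [show (∑ u : Fin (N - (N - r)),
        S ⟨N - r + (t : ℕ), by have := t.isLt; omega⟩
            ⟨N - r + (u : ℕ), by have := u.isLt; omega⟩
          * B ⟨N - r + (u : ℕ), by have := u.isLt; omega⟩ ⟨(j : ℕ), by have := j.isLt; omega⟩)
      = ∑ u : Fin r,
        S ⟨N - r + (t : ℕ), by have := t.isLt; omega⟩
            ⟨N - r + (u : ℕ), by have := u.isLt; omega⟩
          * B ⟨N - r + (u : ℕ), by have := u.isLt; omega⟩ ⟨(j : ℕ), by have := j.isLt; omega⟩ from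
      fin_sum_ext (by omega) _ _ (fun u => rfl)]
    calc (∑ u : Fin r,
          S ⟨N - r + (t : ℕ), by have := t.isLt; omega⟩
              ⟨N - r + (u : ℕ), by have := u.isLt; omega⟩
            * B ⟨N - r + (u : ℕ), by have := u.isLt; omega⟩
              ⟨(j : ℕ), by have := j.isLt; omega⟩)
        = ∑ u : Fin r, ∑ l : Fin r,
            S ⟨N - r + (t : ℕ), by have := t.isLt; omega⟩
                ⟨N - r + (u : ℕ), by have := u.isLt; omega⟩
              * (pBlast u l * aGT r aB (N - r + 1) 0 l j) := by
          apply Finset.sum_congr rfl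
          intro u _
          rw [hg3 u j, Matrix.mul_apply, Finset.mul_sum]
      _ = ∑ l : Fin r, pClast t l * aGT r aB (N - r + 1) 0 l j := by
          rw [Finset.sum_comm]
          apply Finset.sum_congr rfl
          intro l _
          rw [hpClast t l, Finset.sum_mul]
          apply Finset.sum_congr rfl
          intro u _
          ring
      _ = (pClast * aGT r aB (N - r + 1) 0) t j := (Matrix.mul_apply).symm
  have hc4 : ∀ (t : Fin r) (s : ℕ) (hs1 : 2 ≤ s) (hs2 : s ≤ N - r + 1),
      (S * B) ⟨N - r + (t : ℕ), by have := t.isLt; omega⟩ ⟨r + s - 2, by omega⟩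
        = (pClast * aGT r aB (N - r + 1) (s - 1) * qB (s - 1)) t 0 := by
    intro t s hs1 hs2
    rw [Matrix.mul_apply]
    rw [sum_tail (N := N) (c := N - r) (by omega)
      (fun m => S ⟨N - r + (t : ℕ), by have := t.isLt; omega⟩ m
        * B m ⟨r + s - 2, by omega⟩)
      (fun m hm => mul_eq_zero_of_left
        (hS _ m (show (m : ℕ) < N - r + (t : ℕ) from by omega)) _)]
    rw [show (∑ u : Fin (N - (N - r)),
        S ⟨N - r + (t : ℕ), by have := t.isLt; omega⟩
            ⟨N - r + (u : ℕ), by have := u.isLt; omega⟩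
          * B ⟨N - r + (u : ℕ), by have := u.isLt; omega⟩ ⟨r + s - 2, by omega⟩)
      = ∑ u : Fin r,
        S ⟨N - r + (t : ℕ), by have := t.isLt; omega⟩
            ⟨N - r + (u : ℕ), by have := u.isLt; omega⟩
          * B ⟨N - r + (u : ℕ), by have := u.isLt; omega⟩ ⟨r + s - 2, by omega⟩ from
      fin_sum_ext (by omega) _ _ (fun u => rfl)]
    calc (∑ u : Fin r,
          S ⟨N - r + (t : ℕ), by have := t.isLt; omega⟩
              ⟨N - r + (u : ℕ), by have := u.isLt; omega⟩
            * B ⟨N - r + (u : ℕ), by have := u.isLt; omega⟩ ⟨r + s - 2, by omega⟩)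
        = ∑ u : Fin r, ∑ l : Fin r,
            S ⟨N - r + (t : ℕ), by have := t.isLt; omega⟩
                ⟨N - r + (u : ℕ), by have := u.isLt; omega⟩
              * (pBlast u l * (aGT r aB (N - r + 1) (s - 1) * qB (s - 1)) l 0) := by
          apply Finset.sum_congr rfl
          intro u _
          rw [hg4 u s hs1 hs2, Matrix.mul_assoc, Matrix.mul_apply, Finset.mul_sum]
      _ = ∑ l : Fin r, pClast t l * (aGT r aB (N - r + 1) (s - 1) * qB (s - 1)) l 0 := by
          rw [Finset.sum_comm]
          apply Finset.sum_congr rfl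
          intro l _
          rw [hpClast t l, Finset.sum_mul]
          apply Finset.sum_congr rfl
          intro u _
          ring
      _ = (pClast * aGT r aB (N - r + 1) (s - 1) * qB (s - 1)) t 0 := by
          rw [Matrix.mul_assoc, Matrix.mul_apply]
  refine ⟨⟨hc1, hc2, hc3, hc4⟩, ?_⟩
  -- lower Green property for C = S * B
  intro k hk1 hk2
  set C := S * B with hC
  -- cleaner last-rows form for C
  have hc3' : ∀ (m : ℕ) (h1 : N - r + 1 ≤ m) (h2 : m ≤ N) (j : Fin r),
      C ⟨m - 1, by omega⟩ ⟨(j : ℕ), by have := j.isLt; omega⟩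
        = (pClast * aGT r aB (N - r + 1) 0) ⟨m - (N - r + 1), by omega⟩ j := by
    intro m h1 h2 j
    have h3 := hc3 ⟨m - (N - r + 1), by omega⟩ j
    simp only [show N - r + (m - (N - r + 1)) = m - 1 from by omega] at h3
    exact h3
  have hc4' : ∀ (m : ℕ) (h1 : N - r + 1 ≤ m) (h2 : m ≤ N) (s : ℕ)
      (hs1 : 2 ≤ s) (hs2 : s ≤ N - r + 1),
      C ⟨m - 1, by omega⟩ ⟨r + s - 2, by omega⟩
        = (pClast * aGT r aB (N - r + 1) (s - 1) * qB (s - 1)) ⟨m - (N - r + 1), by omega⟩ 0 := by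
    intro m h1 h2 s hs1 hs2
    have h4 := hc4 ⟨m - (N - r + 1), by omega⟩ s hs1 hs2
    simp only [show N - r + (m - (N - r + 1)) = m - 1 from by omega] at h4
    exact h4
  set U : Matrix (Fin (N - k + 1)) (Fin r) ℂ := fun t l =>
    if h : k + (t : ℕ) ≤ N - r then (pC (k + (t : ℕ)) * aGT r aB (k + (t : ℕ)) (k - 1)) 0 l
    else if h2 : k + (t : ℕ) - (N - r + 1) < r then
      (pClast * aGT r aB (N - r + 1) (k - 1)) ⟨k + (t : ℕ) - (N - r + 1), h2⟩ l
    else 0 with hU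
  set W : Matrix (Fin r) (Fin (k + r - 1)) ℂ := fun l j =>
    if hj : (j : ℕ) < r then aGT r aB k 0 l ⟨(j : ℕ), hj⟩
    else (aGT r aB k ((j : ℕ) - r + 1) * qB ((j : ℕ) - r + 1)) l 0 with hW
  have hfact : (C.submatrix
      (fun i : Fin (N - k + 1) => (⟨k - 1 + (i : ℕ), by have := i.isLt; omega⟩ : Fin N))
      (fun j : Fin (k + r - 1) => (⟨(j : ℕ), by have := j.isLt; omega⟩ : Fin N))) = U * W := by
    ext t j
    rw [Matrix.mul_apply, Matrix.submatrix_apply]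
    have htN : (t : ℕ) ≤ N - k := by have := t.isLt; omega
    by_cases hj : (j : ℕ) < r
    · -- first r columns
      have hWj : ∀ l : Fin r, W l j = aGT r aB k 0 l ⟨(j : ℕ), hj⟩ := fun l => dif_pos hj
      by_cases h : k + (t : ℕ) ≤ N - r
      · have hrow := hc1 (k + (t : ℕ)) (by omega) h ⟨(j : ℕ), hj⟩
        simp only [show k + (t : ℕ) - 1 = k - 1 + (t : ℕ) from by omega] at hrow
        have hsplit : aGT r aB (k + (t : ℕ)) 0
            = aGT r aB (k + (t : ℕ)) (k - 1) * aGT r aB k 0 := by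
          have h' := aGT_split r aB (i := k + (t : ℕ)) (s := 0) (m := k - 1)
            (by omega) (by omega)
          rwa [show k - 1 + 1 = k from by omega] at h'
        rw [hrow, hsplit, ← Matrix.mul_assoc, Matrix.mul_apply]
        apply Finset.sum_congr rfl
        intro l _
        rw [hWj l, hU]
        simp only [dif_pos h]
      · have hrow := hc3' (k + (t : ℕ)) (by omega) (by omega) ⟨(j : ℕ), hj⟩
        simp only [show k + (t : ℕ) - 1 = k - 1 + (t : ℕ) from by omega] at hrow
        have hsplit : aGT r aB (N - r + 1) 0
            = aGT r aB (N - r + 1) (k - 1) * aGT r aB k 0 := by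
          have h' := aGT_split r aB (i := N - r + 1) (s := 0) (m := k - 1)
            (by omega) (by omega)
          rwa [show k - 1 + 1 = k from by omega] at h'
        rw [hrow, hsplit, ← Matrix.mul_assoc, Matrix.mul_apply]
        apply Finset.sum_congr rfl
        intro l _
        rw [hWj l, hU]
        simp only [dif_neg h, dif_pos (show k + (t : ℕ) - (N - r + 1) < r from by omega)]
    · -- columns ≥ r : set s := j - r + 2
      push_neg at hj
      set s : ℕ := (j : ℕ) - r + 2 with hs
      have hjs : (j : ℕ) = r + s - 2 := by have := j.isLt; omega
      have hs1 : 2 ≤ s := by omega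
      have hs2 : s ≤ k := by have := j.isLt; omega
      have hWj : ∀ l : Fin r, W l j = (aGT r aB k (s - 1) * qB (s - 1)) l 0 := by
        intro l
        rw [hW]
        simp only [dif_neg (not_lt.mpr hj)]
        rw [show (j : ℕ) - r + 1 = s - 1 from by omega]
      by_cases h : k + (t : ℕ) ≤ N - r
      · have hrow := hc2 (k + (t : ℕ)) (by omega) h s hs1 (by omega)
        simp only [show k + (t : ℕ) - 1 = k - 1 + (t : ℕ) from by omega] at hrow
        have hsplit : aGT r aB (k + (t : ℕ)) (s - 1)
            = aGT r aB (k + (t : ℕ)) (k - 1) * aGT r aB k (s - 1) := by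
          have h' := aGT_split r aB (i := k + (t : ℕ)) (s := s - 1) (m := k - 1)
            (by omega) (by omega)
          rwa [show k - 1 + 1 = k from by omega] at h'
        have hcol : (⟨(j : ℕ), by have := j.isLt; omega⟩ : Fin N)
            = ⟨r + s - 2, by omega⟩ := by
          simp only [hjs]
        rw [hcol, hrow, hsplit, ← Matrix.mul_assoc,
          Matrix.mul_assoc (pC (k + (t : ℕ)) * aGT r aB (k + (t : ℕ)) (k - 1)) _ _,
          Matrix.mul_apply]
        apply Finset.sum_congr rfl
        intro l _
        rw [hWj l, hU]
        simp only [dif_pos h]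
      · have hrow := hc4' (k + (t : ℕ)) (by omega) (by omega) s hs1 (by omega)
        simp only [show k + (t : ℕ) - 1 = k - 1 + (t : ℕ) from by omega] at hrow
        have hsplit : aGT r aB (N - r + 1) (s - 1)
            = aGT r aB (N - r + 1) (k - 1) * aGT r aB k (s - 1) := by
          have h' := aGT_split r aB (i := N - r + 1) (s := s - 1) (m := k - 1)
            (by omega) (by omega)
          rwa [show k - 1 + 1 = k from by omega] at h'
        have hcol : (⟨(j : ℕ), by have := j.isLt; omega⟩ : Fin N)
            = ⟨r + s - 2, by omega⟩ := by
          simp only [hjs]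
        rw [hcol, hrow, hsplit, ← Matrix.mul_assoc,
          Matrix.mul_assoc (pClast * aGT r aB (N - r + 1) (k - 1)) _ _,
          Matrix.mul_apply]
        apply Finset.sum_congr rfl
        intro l _
        rw [hWj l, hU]
        simp only [dif_neg h, dif_pos (show k + (t : ℕ) - (N - r + 1) < r from by omega)]
  rw [hfact]
  exact le_trans (Matrix.rank_mul_le_left U W) (Matrix.rank_le_width U)
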